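/- Let C be an F_q-linear subspace of F_q^m × F_q^n × F_q^m of dimension m + k, let Ĉ be its twisted dual constraint code, and let y ∈ ℂ satisfy 1 + (q−1)y ≠ 0. Then in the ring of matrices over ℂ[[D]] indexed by F_q^m: (I − D·Λ_Ĉ(1,y))⁻¹ = (1/q^m) · F_m · (I − D·((1+(q−1)y)^n/q^k)·Λ_C(1, (1−y)/(1+(q−1)y)))⁻¹ · F_m†. -/

import Mathlib

/-!
STATEMENT 12: For a constraint code `C ⊆ F_q^m × F_q^n × F_q^m` of dimension
`m + k`, its twisted dual `Ĉ`, and `y ∈ ℂ` with `1 + (q−1)y ≠ 0`, in the ring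
of matrices over `ℂ[[D]]` indexed by `F_q^m`:
`(I − D·Λ_Ĉ(1,y))⁻¹ = (1/q^m) · F_m · (I − D·((1+(q−1)y)^n/q^k)·Λ_C(1,(1−y)/(1+(q−1)y)))⁻¹ · F_m†`.
-/

open scoped Classical
open Matrix

noncomputable section

variable (p : ℕ) [Fact p.Prime] (F : Type) [Field F] [Fintype F] [Algebra (ZMod p) F]

/-- Hamming weight of a vector. -/
def wt {n : ℕ} (v : Fin n → F) : ℕ := (Finset.univ.filter fun i => v i ≠ 0).card

/-- The twisted dual constraint code. -/
def twistedDual {m n : ℕ} (C : Set ((Fin m → F) × (Fin n → F) × (Fin m → F))) :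
    Set ((Fin m → F) × (Fin n → F) × (Fin m → F)) :=
  {v | ∀ c ∈ C, (∑ i, v.1 i * c.1 i) + (∑ i, v.2.1 i * c.2.1 i)
      - (∑ i, v.2.2 i * c.2.2 i) = 0}

/-- The weight adjacency matrix `Λ_S(x,y)`. -/
def WAM {m n : ℕ} (S : Set ((Fin m → F) × (Fin n → F) × (Fin m → F)))
    (x y : ℂ) : Matrix (Fin m → F) (Fin m → F) ℂ := fun w w' =>
  ∑ pv : Fin n → F, if (w, pv, w') ∈ S then x ^ (n - wt F pv) * y ^ wt F pv else 0

/-- The Fourier matrix `F_m` with `(a,b)` entry `ω^{tr(a·b)}`. -/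
def FourierMat (m : ℕ) : Matrix (Fin m → F) (Fin m → F) ℂ := fun a b =>
  Complex.exp (2 * Real.pi * Complex.I / p) ^
    (Algebra.trace (ZMod p) F (∑ i, a i * b i)).val

/-- The matrix `I − D·M` over `ℂ[[D]]` associated with a complex matrix `M`. -/
def oneSubDM {m : ℕ} (M : Matrix (Fin m → F) (Fin m → F) ℂ) :
    Matrix (Fin m → F) (Fin m → F) (PowerSeries ℂ) :=
  1 - (PowerSeries.X : PowerSeries ℂ) • M.map ((PowerSeries.C : ℂ →+* PowerSeries ℂ))

lemma omega_prim : IsPrimitiveRoot (Complex.exp (2 * Real.pi * Complex.I / p)) p := by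
  have h := Complex.isPrimitiveRoot_exp p (Nat.Prime.ne_zero Fact.out)
  convert h using 2

def chi : AddChar F ℂ :=
  (AddChar.zmodChar p (omega_prim p).pow_eq_one).compAddMonoidHom
    (Algebra.trace (ZMod p) F).toAddMonoidHom

lemma chi_apply (x : F) :
    chi p F x = Complex.exp (2 * Real.pi * Complex.I / p) ^
      (Algebra.trace (ZMod p) F x).val := rfl

lemma chi_eq_one_iff (x : F) : chi p F x = 1 ↔ Algebra.trace (ZMod p) F x = 0 := by
  rw [chi_apply]
  constructor
  · intro h
    have := (omega_prim p).pow_inj (ZMod.val_lt _) (Nat.Prime.pos Fact.out)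
      (by simpa using h)
    exact (ZMod.val_eq_zero _).mp this
  · intro h
    simp [h]

lemma chi_ne_one : chi p F ≠ 1 := by
  obtain ⟨x, hx⟩ := Algebra.trace_surjective (ZMod p) F 1
  rw [AddChar.ne_one_iff]
  exact ⟨x, fun h => one_ne_zero (hx ▸ (chi_eq_one_iff p F x).mp h)⟩

lemma chi_prim : (chi p F).IsPrimitive := AddChar.IsPrimitive.of_ne_one (chi_ne_one p F)

lemma sum_chi (s : F) :
    ∑ x : F, chi p F (x * s) = if s = 0 then (Fintype.card F : ℂ) else 0 := by
  rw [AddChar.sum_mulShift s (chi_prim p F)]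
  split <;> simp

lemma chi_map_sum {ι : Type*} (s : Finset ι) (f : ι → F) :
    chi p F (∑ i ∈ s, f i) = ∏ i ∈ s, chi p F (f i) := by
  classical
  induction s using Finset.cons_induction with
  | empty => simp
  | cons a s ha ih => rw [Finset.sum_cons, Finset.prod_cons, AddChar.map_add_eq_mul, ih]

lemma chi_abs (x : F) : ‖chi p F x‖ = 1 := by
  rw [chi_apply, norm_pow]
  have : ‖Complex.exp (2 * Real.pi * Complex.I / p)‖ = 1 := by
    rw [Complex.norm_exp]
    have : (2 * Real.pi * Complex.I / p).re = 0 := by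
      simp [Complex.div_re]
    rw [this, Real.exp_zero]
  rw [this, one_pow]

lemma chi_ne_zero (x : F) : chi p F x ≠ 0 := by
  intro h
  have := chi_abs p F x
  rw [h] at this; simp at this

lemma chi_neg_mul (x : F) : chi p F (-x) * chi p F x = 1 := by
  rw [← AddChar.map_add_eq_mul]; simp

lemma conj_chi (x : F) : (starRingEnd ℂ) (chi p F x) = chi p F (-x) := by
  have h1 : chi p F x * (starRingEnd ℂ) (chi p F x) = 1 := by
    rw [Complex.mul_conj, ← Complex.sq_norm, chi_abs]; norm_num
  have h2 : chi p F x * chi p F (-x) = 1 := by rw [mul_comm]; exact chi_neg_mul p F x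
  exact mul_left_cancel₀ (chi_ne_zero p F x) (h1.trans h2.symm)

lemma star_chi (x : F) : star (chi p F x) = chi p F (-x) := conj_chi p F x

/-- The coordinate character sum. -/
lemma coord_sum (y : ℂ) (s : F) :
    ∑ t : F, chi p F (t * s) * (if t = 0 then 1 else y)
     = if s = 0 then 1 + ((Fintype.card F : ℂ) - 1) * y else 1 - y := by
  have key : ∀ t : F, chi p F (t * s) * (if t = 0 then 1 else y)
      = chi p F (t * s) * y + (if t = 0 then (1 : ℂ) - y else 0) := by
    intro t
    by_cases ht : t = 0
    · simp [ht]
    · simp [ht]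
  simp_rw [key]
  rw [Finset.sum_add_distrib, ← Finset.sum_mul, sum_chi, Finset.sum_ite_eq' Finset.univ (0 : F)]
  split
  · simp; ring
  · simp

lemma wt_le {nn : ℕ} (u : Fin nn → F) : wt F u ≤ nn := by
  simpa [wt] using Finset.card_filter_le (Finset.univ : Finset (Fin nn)) (fun i => u i ≠ 0)

lemma card_eq_zero_filter {nn : ℕ} (u : Fin nn → F) :
    (Finset.univ.filter fun i => u i = 0).card = nn - wt F u := by
  have h := Finset.card_filter_add_card_filter_not
    (s := (Finset.univ : Finset (Fin nn))) (p := fun i => u i = 0)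
  simp only [Finset.card_univ, Fintype.card_fin] at h
  have h2 : (Finset.univ.filter fun i => ¬ u i = 0).card = wt F u := rfl
  omega

lemma pow_wt_eq_prod {nn : ℕ} (y : ℂ) (u : Fin nn → F) :
    y ^ wt F u = ∏ i, (if u i = 0 then 1 else y) := by
  rw [Finset.prod_ite, Finset.prod_const, Finset.prod_const, one_pow, one_mul, wt]

lemma sum_wt (y : ℂ) (nn : ℕ) (u : Fin nn → F) :
    ∑ pv : Fin nn → F, chi p F (∑ i, pv i * u i) * y ^ wt F pv
      = (1 + ((Fintype.card F : ℂ) - 1) * y) ^ (nn - wt F u) * (1 - y) ^ wt F u := by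
  have h1 : ∀ pv : Fin nn → F, chi p F (∑ i, pv i * u i) * y ^ wt F pv
      = ∏ i, (chi p F (pv i * u i) * (if pv i = 0 then 1 else y)) := by
    intro pv
    rw [chi_map_sum, pow_wt_eq_prod, Finset.prod_mul_distrib]
  simp_rw [h1]
  have h2 := Finset.prod_univ_sum (fun _ : Fin nn => (Finset.univ : Finset F))
    (fun i t => chi p F (t * u i) * (if t = 0 then 1 else y))
  rw [Fintype.piFinset_univ] at h2
  rw [← h2]
  have h3 : ∀ i, (∑ t : F, chi p F (t * u i) * (if t = 0 then 1 else y))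
      = if u i = 0 then 1 + ((Fintype.card F : ℂ) - 1) * y else 1 - y := fun i => coord_sum p F y (u i)
  simp_rw [h3]
  rw [Finset.prod_ite, Finset.prod_const, Finset.prod_const, card_eq_zero_filter, wt]

lemma sum_chi_vec (mm : ℕ) (d : Fin mm → F) :
    ∑ b : Fin mm → F, chi p F (∑ i, b i * d i)
      = if d = 0 then ((Fintype.card F : ℂ)) ^ mm else 0 := by
  simp_rw [chi_map_sum]
  have h2 := Finset.prod_univ_sum (fun _ : Fin mm => (Finset.univ : Finset F))
    (fun i t => chi p F (t * d i))
  rw [Fintype.piFinset_univ] at h2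
  rw [← h2]
  simp_rw [sum_chi]
  by_cases hd : d = 0
  · simp [hd]
  · obtain ⟨i, hi⟩ : ∃ i, d i ≠ 0 := by
      by_contra h
      push_neg at h
      exact hd (funext h)
    rw [if_neg hd]
    exact Finset.prod_eq_zero (Finset.mem_univ i) (by simp [hi])


/-- The twisted bilinear form as a linear map in the second argument. -/
def Bform {m n : ℕ} (v : (Fin m → F) × (Fin n → F) × (Fin m → F)) :
    ((Fin m → F) × (Fin n → F) × (Fin m → F)) →ₗ[F] F where
  toFun c := (∑ i, v.1 i * c.1 i) + (∑ i, v.2.1 i * c.2.1 i) - (∑ i, v.2.2 i * c.2.2 i)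
  map_add' c c' := by
    simp only [Prod.fst_add, Prod.snd_add, Pi.add_apply, mul_add, Finset.sum_add_distrib]
    ring
  map_smul' t c := by
    simp only [Prod.smul_fst, Prod.smul_snd, Pi.smul_apply, smul_eq_mul, RingHom.id_apply,
      mul_sub, mul_add, Finset.mul_sum]
    congr 1 <;> [congr 1; skip] <;> (apply Finset.sum_congr rfl; intros; ring)

lemma mem_twistedDual_iff {m n : ℕ} (C : Set ((Fin m → F) × (Fin n → F) × (Fin m → F)))
    (v : (Fin m → F) × (Fin n → F) × (Fin m → F)) :
    v ∈ twistedDual F C ↔ ∀ c ∈ C, Bform F v c = 0 := Iff.rfl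

lemma sum_chi_submodule {m n : ℕ}
    (C : Submodule F ((Fin m → F) × (Fin n → F) × (Fin m → F)))
    (v : (Fin m → F) × (Fin n → F) × (Fin m → F)) :
    ∑ c : C, chi p F (Bform F v c)
      = if v ∈ twistedDual F (C : Set ((Fin m → F) × (Fin n → F) × (Fin m → F))) then (Fintype.card C : ℂ) else 0 := by
  by_cases hv : v ∈ twistedDual F (C : Set ((Fin m → F) × (Fin n → F) × (Fin m → F)))
  · rw [if_pos hv]
    have : ∀ c : C, chi p F (Bform F v c) = 1 := by
      intro c
      rw [(mem_twistedDual_iff F _ v).mp hv c c.2]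
      exact AddChar.map_zero_eq_one _
    simp [this]
  · rw [if_neg hv]
    set ψ : AddChar C ℂ :=
      (chi p F).compAddMonoidHom (((Bform F v).comp C.subtype).toAddMonoidHom) with hψ
    have hne : ψ ≠ 1 := by
      rw [mem_twistedDual_iff] at hv
      push_neg at hv
      obtain ⟨c₀, hc₀C, hc₀⟩ := hv
      obtain ⟨u, hu⟩ := Algebra.trace_surjective (ZMod p) F 1
      set s := Bform F v c₀ with hs
      set c : C := ⟨(u * s⁻¹) • c₀, C.smul_mem _ hc₀C⟩ with hc
      have hBc : Bform F v (c : _) = u := by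
        rw [hc]
        simp only [_root_.map_smul, smul_eq_mul, ← hs]
        field_simp
      rw [AddChar.ne_one_iff]
      refine ⟨c, ?_⟩
      show chi p F (Bform F v (C.subtype c)) ≠ 1
      rw [C.coe_subtype, hBc]
      simp only [ne_eq, chi_eq_one_iff, hu]
      exact one_ne_zero
    have := AddChar.sum_eq_zero_of_ne_one hne
    simpa [hψ] using this

lemma FourierMat_apply {m : ℕ} (a b : Fin m → F) :
    FourierMat p F m a b = chi p F (∑ i, a i * b i) := rfl

lemma Fm_mul_FmH (m : ℕ) :
    FourierMat p F m * (FourierMat p F m)ᴴ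
      = ((Fintype.card F : ℂ) ^ m) • (1 : Matrix (Fin m → F) (Fin m → F) ℂ) := by
  ext w w'
  rw [Matrix.mul_apply]
  simp only [Matrix.conjTranspose_apply, FourierMat_apply, star_chi]
  have key : ∀ b : Fin m → F,
      chi p F (∑ i, w i * b i) * chi p F (-∑ i, w' i * b i)
        = chi p F (∑ i, b i * (w i - w' i)) := by
    intro b
    rw [← AddChar.map_add_eq_mul]
    congr 1
    rw [← Finset.sum_neg_distrib, ← Finset.sum_add_distrib]
    exact Finset.sum_congr rfl fun i _ => by ring
  simp_rw [key, sum_chi_vec]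
  by_cases h : w = w'
  · have h0 : (fun i => w i - w' i) = 0 := by funext i; simp [h]
    rw [if_pos h0, Matrix.smul_apply, h, Matrix.one_apply_eq, smul_eq_mul, mul_one]
  · have : ¬ (fun i => w i - w' i) = (0 : Fin m → F) := by
      intro h0
      apply h
      funext i
      have := congrFun h0 i
      simpa [sub_eq_zero] using this
    rw [if_neg this, Matrix.smul_apply, Matrix.one_apply_ne h, smul_zero]

lemma FmH_mul_Fm (m : ℕ) :
    (FourierMat p F m)ᴴ * FourierMat p F m
      = ((Fintype.card F : ℂ) ^ m) • (1 : Matrix (Fin m → F) (Fin m → F) ℂ) := by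
  ext a b
  rw [Matrix.mul_apply]
  simp only [Matrix.conjTranspose_apply, FourierMat_apply, star_chi]
  have key : ∀ w : Fin m → F,
      chi p F (-∑ i, w i * a i) * chi p F (∑ i, w i * b i)
        = chi p F (∑ i, w i * (b i - a i)) := by
    intro w
    rw [← AddChar.map_add_eq_mul]
    congr 1
    rw [← Finset.sum_neg_distrib, ← Finset.sum_add_distrib]
    exact Finset.sum_congr rfl fun i _ => by ring
  simp_rw [key, sum_chi_vec]
  by_cases h : a = b
  · have h0 : (fun i => b i - a i) = 0 := by funext i; simp [h]
    rw [if_pos h0, Matrix.smul_apply, h, Matrix.one_apply_eq, smul_eq_mul, mul_one]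
  · have : ¬ (fun i => b i - a i) = (0 : Fin m → F) := by
      intro h0
      apply h
      funext i
      have := congrFun h0 i
      exact (sub_eq_zero.mp this).symm
    rw [if_neg this, Matrix.smul_apply, Matrix.one_apply_ne h, smul_zero]

lemma main_complex {m n k : ℕ}
    (C : Submodule F ((Fin m → F) × (Fin n → F) × (Fin m → F)))
    (hC : Module.finrank F C = m + k) (y : ℂ)
    (hy : 1 + ((Fintype.card F : ℂ) - 1) * y ≠ 0) :
    WAM F (twistedDual F (C : Set ((Fin m → F) × (Fin n → F) × (Fin m → F)))) 1 y
      = ((Fintype.card F : ℂ) ^ m)⁻¹ •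
          (FourierMat p F m *
            (((1 + ((Fintype.card F : ℂ) - 1) * y) ^ n / (Fintype.card F : ℂ) ^ k) •
              WAM F (C : Set ((Fin m → F) × (Fin n → F) × (Fin m → F))) 1 ((1 - y) / (1 + ((Fintype.card F : ℂ) - 1) * y))) *
            (FourierMat p F m)ᴴ) := by
  have hq : (Fintype.card F : ℂ) ≠ 0 := Nat.cast_ne_zero.mpr Fintype.card_ne_zero
  set q : ℂ := (Fintype.card F : ℂ) with hqdef
  set Y : ℂ := 1 + (q - 1) * y with hYdef
  set z : ℂ := (1 - y) / Y with hzdef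
  have hcard : (Fintype.card C : ℂ) = q ^ (m + k) := by
    rw [Module.card_eq_pow_finrank (K := F) (V := C), hC]
    push_cast
    rfl
  ext w w'
  set g : ((Fin m → F) × (Fin n → F) × (Fin m → F)) → ℂ := fun v =>
    chi p F (∑ i, w i * v.1 i) * chi p F (-∑ i, w' i * v.2.2 i) * z ^ wt F v.2.1 with hg
  set T : ℂ := ∑ b : Fin m → F, ∑ a : Fin m → F, ∑ pv : Fin n → F,
    (if (a, pv, b) ∈ C then g (a, pv, b) else 0) with hT
  have step3 : ∀ j : ℕ, j ≤ n → Y ^ (n - j) * (1 - y) ^ j = Y ^ n * z ^ j := by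
    intro j hj
    rw [hzdef, div_pow, pow_sub₀ Y hy hj]
    field_simp
  have hsub : ∑ c : C, g c = T := by
    have h1 : ∑ c : C, g c
        = ∑ v : (Fin m → F) × (Fin n → F) × (Fin m → F), (if v ∈ C then g v else 0) := by
      rw [← Finset.sum_filter]
      exact (Finset.sum_subtype _ (by simp) g).symm
    rw [h1, Fintype.sum_prod_type]
    simp_rw [Fintype.sum_prod_type]
    rw [hT]
    calc (∑ a : Fin m → F, ∑ pv : Fin n → F, ∑ b : Fin m → F,
            (if (a, pv, b) ∈ C then g (a, pv, b) else 0))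
        = ∑ a : Fin m → F, ∑ b : Fin m → F, ∑ pv : Fin n → F,
            (if (a, pv, b) ∈ C then g (a, pv, b) else 0) :=
          Finset.sum_congr rfl fun a _ => Finset.sum_comm
      _ = ∑ b : Fin m → F, ∑ a : Fin m → F, ∑ pv : Fin n → F,
            (if (a, pv, b) ∈ C then g (a, pv, b) else 0) := Finset.sum_comm
  have hLHS : WAM F (twistedDual F (C : Set ((Fin m → F) × (Fin n → F) × (Fin m → F)))) 1 y w w'
      = (q ^ (m + k))⁻¹ * (Y ^ n * T) := by
    have step1 : ∀ pv : Fin n → F,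
        (if (w, pv, w') ∈ twistedDual F (C : Set ((Fin m → F) × (Fin n → F) × (Fin m → F)))
          then (1 : ℂ) ^ (n - wt F pv) * y ^ wt F pv else 0)
        = (q ^ (m + k))⁻¹ * ((∑ c : C, chi p F (Bform F (w, pv, w') c)) * y ^ wt F pv) := by
      intro pv
      rw [sum_chi_submodule p F C, hcard]
      split
      · rw [one_pow]
        field_simp
      · simp
    show (∑ pv : Fin n → F, if (w, pv, w') ∈ twistedDual F (C : Set ((Fin m → F) × (Fin n → F) × (Fin m → F)))
        then (1 : ℂ) ^ (n - wt F pv) * y ^ wt F pv else 0) = _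
    simp_rw [step1]
    rw [← Finset.mul_sum]
    congr 1
    simp_rw [Finset.sum_mul]
    rw [Finset.sum_comm]
    have step2 : ∀ c : C, ∑ pv : Fin n → F, chi p F (Bform F (w, pv, w') c) * y ^ wt F pv
        = Y ^ n * g c.val := by
      intro c
      have hB : ∀ pv : Fin n → F, chi p F (Bform F (w, pv, w') c)
          = chi p F (∑ i, w i * c.val.1 i) * (chi p F (-∑ i, w' i * c.val.2.2 i)
              * chi p F (∑ i, pv i * c.val.2.1 i)) := by
        intro pv
        show chi p F ((∑ i, w i * c.val.1 i) + (∑ i, pv i * c.val.2.1 i)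
            - (∑ i, w' i * c.val.2.2 i)) = _
        rw [sub_eq_add_neg, AddChar.map_add_eq_mul, AddChar.map_add_eq_mul]
        ring
      simp_rw [hB, mul_assoc]
      rw [← Finset.mul_sum, ← Finset.mul_sum]
      rw [sum_wt p F y n (c.val.2.1), step3 _ (wt_le F _)]
      rw [hg]
      ring
    simp_rw [step2]
    rw [← Finset.mul_sum, hsub]
  rw [hLHS]
  have hRHS : (((q : ℂ) ^ m)⁻¹ •
          (FourierMat p F m *
            ((Y ^ n / q ^ k) • WAM F (C : Set ((Fin m → F) × (Fin n → F) × (Fin m → F))) 1 z) *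
            (FourierMat p F m)ᴴ)) w w'
      = (q ^ m)⁻¹ * ((Y ^ n / q ^ k) * T) := by
    rw [Matrix.smul_apply, Matrix.mul_apply]
    simp_rw [Matrix.mul_apply, Matrix.smul_apply, Matrix.conjTranspose_apply,
      FourierMat_apply, star_chi, smul_eq_mul]
    show (q ^ m)⁻¹ * _ = _
    congr 1
    rw [hT, Finset.mul_sum]
    refine Finset.sum_congr rfl fun b _ => ?_
    rw [Finset.sum_mul, Finset.mul_sum]
    refine Finset.sum_congr rfl fun a _ => ?_
    show (chi p F (∑ i, w i * a i) *
        ((Y ^ n / q ^ k) * ∑ pv : Fin n → F,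
          if (a, pv, b) ∈ (C : Set ((Fin m → F) × (Fin n → F) × (Fin m → F))) then (1 : ℂ) ^ (n - wt F pv) * z ^ wt F pv else 0)) *
        chi p F (-∑ i, w' i * b i)
      = (Y ^ n / q ^ k) * ∑ pv : Fin n → F, (if (a, pv, b) ∈ C then g (a, pv, b) else 0)
    rw [Finset.mul_sum, Finset.mul_sum, Finset.sum_mul, Finset.mul_sum]
    refine Finset.sum_congr rfl fun pv _ => ?_
    rw [hg]
    by_cases hmem : (a, pv, b) ∈ C
    · rw [if_pos (SetLike.mem_coe.mpr hmem), if_pos hmem, one_pow]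
      ring
    · rw [if_neg (fun h => hmem (SetLike.mem_coe.mp h)), if_neg hmem]
      ring
  rw [hRHS]
  rw [pow_add]
  field_simp

lemma mapC_smul {mm : ℕ} (r : ℂ) (A : Matrix (Fin mm → F) (Fin mm → F) ℂ) :
    ((r • A).map ((PowerSeries.C : ℂ →+* PowerSeries ℂ))) = r • (A.map ((PowerSeries.C : ℂ →+* PowerSeries ℂ))) := by
  ext i j
  simp [Matrix.map_apply, PowerSeries.smul_eq_C_mul, _root_.map_mul]

lemma mapC_one {mm : ℕ} :
    ((1 : Matrix (Fin mm → F) (Fin mm → F) ℂ).map ((PowerSeries.C : ℂ →+* PowerSeries ℂ)))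
      = (1 : Matrix (Fin mm → F) (Fin mm → F) (PowerSeries ℂ)) := by
  ext i j
  by_cases h : i = j <;> simp [Matrix.map_apply, Matrix.one_apply, h]

lemma Fc_mul_Fcd (m : ℕ) :
    (FourierMat p F m).map ((PowerSeries.C : ℂ →+* PowerSeries ℂ)) * ((FourierMat p F m)ᴴ).map ((PowerSeries.C : ℂ →+* PowerSeries ℂ))
      = ((Fintype.card F : ℂ) ^ m) •
          (1 : Matrix (Fin m → F) (Fin m → F) (PowerSeries ℂ)) := by
  rw [← Matrix.map_mul, Fm_mul_FmH, mapC_smul, mapC_one]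

lemma Fcd_mul_Fc (m : ℕ) :
    ((FourierMat p F m)ᴴ).map ((PowerSeries.C : ℂ →+* PowerSeries ℂ)) * (FourierMat p F m).map ((PowerSeries.C : ℂ →+* PowerSeries ℂ))
      = ((Fintype.card F : ℂ) ^ m) •
          (1 : Matrix (Fin m → F) (Fin m → F) (PowerSeries ℂ)) := by
  rw [← Matrix.map_mul, FmH_mul_Fm, mapC_smul, mapC_one]

lemma isUnit_det_oneSubDM {mm : ℕ} (B : Matrix (Fin mm → F) (Fin mm → F) ℂ) :
    IsUnit (oneSubDM F B).det := by
  rw [PowerSeries.isUnit_iff_constantCoeff]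
  have h : ((PowerSeries.constantCoeff (R := ℂ))) (oneSubDM F B).det
      = ((oneSubDM F B).map ((PowerSeries.constantCoeff (R := ℂ)))).det := by
    rw [RingHom.map_det]
    rfl
  have h2 : (oneSubDM F B).map ((PowerSeries.constantCoeff (R := ℂ))) = 1 := by
    ext i j
    simp only [oneSubDM, Matrix.map_apply, Matrix.sub_apply, Matrix.smul_apply, smul_eq_mul,
      map_sub, _root_.map_mul, PowerSeries.constantCoeff_X, zero_mul, sub_zero]
    by_cases hij : i = j <;> simp [Matrix.one_apply, hij]
  rw [h, h2, Matrix.det_one]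
  exact isUnit_one

theorem stmt12 (m n k : ℕ)
    (C : Submodule F ((Fin m → F) × (Fin n → F) × (Fin m → F)))
    (hC : Module.finrank F C = m + k) (y : ℂ)
    (hy : 1 + ((Fintype.card F : ℂ) - 1) * y ≠ 0) :
    (oneSubDM F (WAM F (twistedDual F
        (C : Set ((Fin m → F) × (Fin n → F) × (Fin m → F)))) 1 y))⁻¹
      = ((Fintype.card F : ℂ) ^ m)⁻¹ •
          ((FourierMat p F m).map ((PowerSeries.C : ℂ →+* PowerSeries ℂ)) *
            (oneSubDM F
              (((1 + ((Fintype.card F : ℂ) - 1) * y) ^ n / (Fintype.card F : ℂ) ^ k) •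
                WAM F (C : Set ((Fin m → F) × (Fin n → F) × (Fin m → F)))
                  1 ((1 - y) / (1 + ((Fintype.card F : ℂ) - 1) * y))))⁻¹ *
            ((FourierMat p F m)ᴴ).map ((PowerSeries.C : ℂ →+* PowerSeries ℂ))) := by
  have hq : (Fintype.card F : ℂ) ≠ 0 := Nat.cast_ne_zero.mpr Fintype.card_ne_zero
  have hqm : ((Fintype.card F : ℂ) ^ m) ≠ 0 := pow_ne_zero _ hq
  set B : Matrix (Fin m → F) (Fin m → F) ℂ :=
    ((1 + ((Fintype.card F : ℂ) - 1) * y) ^ n / (Fintype.card F : ℂ) ^ k) •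
      WAM F (C : Set ((Fin m → F) × (Fin n → F) × (Fin m → F)))
        1 ((1 - y) / (1 + ((Fintype.card F : ℂ) - 1) * y)) with hBdef
  set M : Matrix (Fin m → F) (Fin m → F) (PowerSeries ℂ) := oneSubDM F B with hMdef
  set Fc : Matrix (Fin m → F) (Fin m → F) (PowerSeries ℂ) :=
    (FourierMat p F m).map ((PowerSeries.C : ℂ →+* PowerSeries ℂ)) with hFc
  set Fcd : Matrix (Fin m → F) (Fin m → F) (PowerSeries ℂ) :=
    ((FourierMat p F m)ᴴ).map ((PowerSeries.C : ℂ →+* PowerSeries ℂ)) with hFcd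
  have hdet : IsUnit M.det := isUnit_det_oneSubDM F B
  have hfact : oneSubDM F (WAM F (twistedDual F
        (C : Set ((Fin m → F) × (Fin n → F) × (Fin m → F)))) 1 y)
      = ((Fintype.card F : ℂ) ^ m)⁻¹ • (Fc * M * Fcd) := by
    haveI : SMulCommClass (PowerSeries ℂ) ℂ (PowerSeries ℂ) :=
      SMulCommClass.symm _ _ _
    rw [main_complex p F C hC y hy]
    rw [oneSubDM, hMdef, oneSubDM]
    rw [Matrix.mul_sub, Matrix.sub_mul, smul_sub]
    rw [Matrix.mul_one, hFc, hFcd, Fc_mul_Fcd]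
    rw [smul_smul, inv_mul_cancel₀ hqm, one_smul]
    congr 1
    rw [mapC_smul, smul_comm, Matrix.map_mul, Matrix.map_mul, Matrix.mul_smul,
      Matrix.smul_mul]
  rw [hfact]
  apply Matrix.inv_eq_right_inv
  rw [Matrix.smul_mul, Matrix.mul_smul, smul_smul]
  have hinner : (Fc * M * Fcd) * (Fc * M⁻¹ * Fcd)
      = ((Fintype.card F : ℂ) ^ m) • (((Fintype.card F : ℂ) ^ m) •
          (1 : Matrix (Fin m → F) (Fin m → F) (PowerSeries ℂ))) := by
    calc (Fc * M * Fcd) * (Fc * M⁻¹ * Fcd)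
        = Fc * M * (Fcd * Fc) * (M⁻¹ * Fcd) := by
          simp only [← mul_assoc]
      _ = ((Fintype.card F : ℂ) ^ m) • (Fc * M * (M⁻¹ * Fcd)) := by
          rw [Fcd_mul_Fc, Matrix.mul_smul, Matrix.smul_mul, Matrix.mul_one]
      _ = ((Fintype.card F : ℂ) ^ m) • (Fc * Fcd) := by
          rw [mul_assoc Fc M (M⁻¹ * Fcd), ← mul_assoc M M⁻¹ Fcd,
            Matrix.mul_nonsing_inv M hdet, one_mul]
      _ = ((Fintype.card F : ℂ) ^ m) • (((Fintype.card F : ℂ) ^ m) •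
            (1 : Matrix (Fin m → F) (Fin m → F) (PowerSeries ℂ))) := by
          rw [Fc_mul_Fcd]
  rw [hinner, smul_smul, smul_smul]
  have hs : ((Fintype.card F : ℂ) ^ m)⁻¹ * ((Fintype.card F : ℂ) ^ m)⁻¹ *
      ((Fintype.card F : ℂ) ^ m) * ((Fintype.card F : ℂ) ^ m) = 1 := by
    field_simp
  rw [hs, one_smul]
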